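/- Define f(k) = (log(195k) + 8)²/(π(k-1)) for real k > 1, and g(k) = (log(50k) + 1.4)²/(π(k-1)). Then for all real k > 1000: 1/f(k) ≤ (3/4 + 1/f(k-75)) / (1 + g(k)/π). -/

import Mathlib

set_option maxHeartbeats 1000000


noncomputable def fBound (k : ℝ) : ℝ := (Real.log (195 * k) + 8) ^ 2 / (Real.pi * (k - 1))

noncomputable def gBound (k : ℝ) : ℝ := (Real.log (50 * k) + 1.4) ^ 2 / (Real.pi * (k - 1))

/-- The key numerical inequality in the induction step of Theorem 1.3-3. -/
theorem induction_step_inequality (k : ℝ) (hk : 1000 < k) :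
    1 / fBound k ≤ (3 / 4 + 1 / fBound (k - 75)) / (1 + gBound k / Real.pi) := by
  have hπ : (3.141592 : ℝ) < Real.pi := Real.pi_gt_d6
  have hπ' : Real.pi < 3.141593 := Real.pi_lt_d6
  have hπpos : (0:ℝ) < Real.pi := Real.pi_pos
  have hk1 : (0:ℝ) < k - 1 := by linarith
  have hk76 : (0:ℝ) < k - 76 := by linarith
  set L : ℝ := Real.log (195 * k) + 8 with hLdef
  set M : ℝ := Real.log (195 * (k - 75)) + 8 with hMdef
  set N : ℝ := Real.log (50 * k) + 1.4 with hNdef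
  have hlog2 : (0.6931471803 : ℝ) < Real.log 2 := Real.log_two_gt_d9
  -- lower bound for log (50k)
  have hN0 : (15:ℝ) * Real.log 2 ≤ Real.log (50 * k) := by
    have h1 : ((2:ℝ)^(15:ℕ)) ≤ 50 * k := by norm_num; linarith
    calc (15:ℝ) * Real.log 2 = Real.log ((2:ℝ)^(15:ℕ)) := by
          rw [Real.log_pow]; push_cast; ring
      _ ≤ Real.log (50 * k) := Real.log_le_log (by positivity) h1
  have hN : (11.79 : ℝ) ≤ N := by rw [hNdef]; nlinarith
  -- log 3.9 lower bound
  have h39 : (19:ℝ)/10 * Real.log 2 ≤ Real.log 3.9 := by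
    have h1 : ((2:ℝ)^(19:ℕ)) ≤ (3.9:ℝ)^(10:ℕ) := by norm_num
    have h2 : Real.log ((2:ℝ)^(19:ℕ)) ≤ Real.log ((3.9:ℝ)^(10:ℕ)) :=
      Real.log_le_log (by positivity) h1
    rw [Real.log_pow, Real.log_pow] at h2
    push_cast at h2
    linarith
  -- relation between L and N
  have hLN : N + 7.91 ≤ L := by
    have hsplit : Real.log (195 * k) = Real.log 3.9 + Real.log (50 * k) := by
      rw [← Real.log_mul (by norm_num) (by positivity)]
      norm_num
      ring_nf
    rw [hLdef, hNdef, hsplit]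
    nlinarith
  have hLpos : (0:ℝ) < L := by linarith
  have hMpos : (0:ℝ) < M := by
    rw [hMdef]
    have : (0:ℝ) ≤ Real.log (195 * (k - 75)) := Real.log_nonneg (by nlinarith)
    linarith
  have hNpos : (0:ℝ) < N := lt_of_lt_of_le (by norm_num) hN
  have hML : M ≤ L := by
    rw [hMdef, hLdef]
    have : Real.log (195 * (k - 75)) ≤ Real.log (195 * k) :=
      Real.log_le_log (by nlinarith) (by nlinarith)
    linarith
  -- unfold the definitions
  have hf1 : 1 / fBound k = Real.pi * (k - 1) / L ^ 2 := by
    rw [fBound, one_div_div]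
  have hf2 : 1 / fBound (k - 75) = Real.pi * (k - 76) / M ^ 2 := by
    rw [fBound, one_div_div, show k - 75 - 1 = k - 76 from by ring, ← hMdef]
  have hg : gBound k / Real.pi = N ^ 2 / (Real.pi ^ 2 * (k - 1)) := by
    rw [gBound]
    field_simp
    ring
  rw [hf1, hf2, hg]
  have hD : (0:ℝ) < 1 + N ^ 2 / (Real.pi ^ 2 * (k - 1)) := by positivity
  rw [le_div_iff₀ hD]
  have hexpand : Real.pi * (k - 1) / L ^ 2 * (1 + N ^ 2 / (Real.pi ^ 2 * (k - 1)))
      = Real.pi * (k - 1) / L ^ 2 + N ^ 2 / (Real.pi * L ^ 2) := by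
    field_simp
  rw [hexpand]
  have hstep : Real.pi * (k - 76) / L ^ 2 ≤ Real.pi * (k - 76) / M ^ 2 := by
    have hM2L2 : M ^ 2 ≤ L ^ 2 := by nlinarith
    gcongr
  have hkey : 75 * Real.pi ^ 2 + N ^ 2 ≤ 3 / 4 * (Real.pi * L ^ 2) := by
    have hL2 : (N + 7.91) ^ 2 ≤ L ^ 2 := by nlinarith
    have hπL : 3.141592 * (N + 7.91) ^ 2 ≤ Real.pi * L ^ 2 := by
      nlinarith [mul_le_mul_of_nonneg_left hL2 (le_of_lt hπpos), sq_nonneg (N + 7.91)]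
    have hπ2 : Real.pi ^ 2 ≤ 9.86961 := by nlinarith
    nlinarith [sq_nonneg (N - 11.79)]
  have hmain : Real.pi * (k - 1) / L ^ 2 + N ^ 2 / (Real.pi * L ^ 2)
      ≤ 3 / 4 + Real.pi * (k - 76) / L ^ 2 := by
    have h1 : Real.pi * (k - 1) / L ^ 2 + N ^ 2 / (Real.pi * L ^ 2)
        - Real.pi * (k - 76) / L ^ 2 = (75 * Real.pi ^ 2 + N ^ 2) / (Real.pi * L ^ 2) := by
      field_simp
      ring
    have h2 : (75 * Real.pi ^ 2 + N ^ 2) / (Real.pi * L ^ 2) ≤ 3 / 4 := by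
      rw [div_le_iff₀ (by positivity)]
      linarith
    linarith
  linarith
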